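/- Corollary (first part): For every index i : Fin n, let L⁽ⁱ⁾ := Matrix.updateCol L i 𝟙 be the matrix obtained from L by replacing its i-th column with 𝟙. Then T_P equals the range of L⁽ⁱ⁾: for every x : Fin n → ℝ, x ∈ T_P if and only if there exists y : Fin n → ℝ with x = L⁽ⁱ⁾.mulVec y. -/

import Mathlib

open Filter Matrix

/-- Corollary (first part): `T_P` is the range of the matrix obtained from
`L = 1 - P` by replacing its `i`-th column with the all-ones vector. -/
theorem region_of_convergence_eq_range_updateCol_one
    (n : ℕ) (hn : 0 < n) (P Q : Matrix (Fin n) (Fin n) ℝ)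
    (hPnonneg : ∀ i j, 0 ≤ P i j) (hProw : ∀ i, ∑ j, P i j = 1)
    (hconv : Tendsto (fun k => P ^ k) atTop (nhds Q)) (i : Fin n) :
    ∀ x : Fin n → ℝ,
      (∃ a : ℝ, ∀ j, Q.mulVec x j = a) ↔
        ∃ y : Fin n → ℝ,
          x = (Matrix.updateCol (1 - P) i (fun _ => (1 : ℝ))).mulVec y := by
  have hPQ : P * Q = Q := by
    have h1 : Tendsto (fun k : ℕ => P * P ^ k) atTop (nhds (P * Q)) :=
      ((continuous_const.matrix_mul continuous_id).tendsto Q).comp hconv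
    have h2 : Tendsto (fun k : ℕ => P ^ (k + 1)) atTop (nhds Q) :=
      hconv.comp (tendsto_add_atTop_nat 1)
    refine tendsto_nhds_unique ?_ h2
    simpa [pow_succ'] using h1
  have hQP : Q * P = Q := by
    have h1 : Tendsto (fun k : ℕ => P ^ k * P) atTop (nhds (Q * P)) :=
      ((continuous_id.matrix_mul continuous_const).tendsto Q).comp hconv
    have h2 : Tendsto (fun k : ℕ => P ^ (k + 1)) atTop (nhds Q) :=
      hconv.comp (tendsto_add_atTop_nat 1)
    refine tendsto_nhds_unique ?_ h2
    simpa [pow_succ] using h1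
  have hfix : ∀ v : Fin n → ℝ, P.mulVec v = v → Q.mulVec v = v := by
    intro v hv
    have hk : ∀ k : ℕ, (P ^ k).mulVec v = v := by
      intro k; induction k with
      | zero => simp
      | succ k ih => rw [pow_succ, ← Matrix.mulVec_mulVec, hv, ih]
    have h1 : Tendsto (fun k : ℕ => (P ^ k).mulVec v) atTop (nhds (Q.mulVec v)) :=
      ((continuous_id.matrix_mulVec continuous_const).tendsto Q).comp hconv
    have h2 : Tendsto (fun k : ℕ => (P ^ k).mulVec v) atTop (nhds v) := by
      simp only [hk]; exact tendsto_const_nhds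
    exact tendsto_nhds_unique h1 h2
  have honeP : P.mulVec (fun _ => (1:ℝ)) = fun _ => 1 := by
    funext j; simp [Matrix.mulVec, dotProduct, hProw j]
  have hQone : Q.mulVec (fun _ => (1:ℝ)) = fun _ => 1 := hfix _ honeP
  have hLone : ((1 : Matrix (Fin n) (Fin n) ℝ) - P).mulVec (fun _ => (1:ℝ)) = 0 := by
    rw [Matrix.sub_mulVec, Matrix.one_mulVec, honeP, sub_self]
  have hLQ : ((1 : Matrix (Fin n) (Fin n) ℝ) - P) * Q = 0 := by
    rw [sub_mul, one_mul, hPQ, sub_self]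
  have hQL : Q * ((1 : Matrix (Fin n) (Fin n) ℝ) - P) = 0 := by
    rw [mul_sub, mul_one, hQP, sub_self]
  set f := Q.mulVecLin with hf
  set g := ((1 : Matrix (Fin n) (Fin n) ℝ) - P).mulVecLin with hg
  have hkerg : LinearMap.ker g = LinearMap.range f := by
    ext v
    simp only [LinearMap.mem_ker, LinearMap.mem_range, hf, hg, Matrix.mulVecLin_apply]
    constructor
    · intro hv
      have hPv : P.mulVec v = v := by
        rw [Matrix.sub_mulVec, Matrix.one_mulVec, sub_eq_zero] at hv
        exact hv.symm
      exact ⟨v, hfix v hPv⟩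
    · rintro ⟨w, rfl⟩
      rw [Matrix.mulVec_mulVec, hLQ, Matrix.zero_mulVec]
  have hle : LinearMap.range g ≤ LinearMap.ker f := by
    rintro v ⟨w, rfl⟩
    simp only [LinearMap.mem_ker, hf, hg, Matrix.mulVecLin_apply]
    rw [Matrix.mulVec_mulVec, hQL, Matrix.zero_mulVec]
  have hrk : LinearMap.range g = LinearMap.ker f := by
    apply Submodule.eq_of_le_of_finrank_eq hle
    have h1 := LinearMap.finrank_range_add_finrank_ker f
    have h2 := LinearMap.finrank_range_add_finrank_ker g
    rw [hkerg] at h2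
    omega
  have hupdate : ∀ y : Fin n → ℝ,
      (Matrix.updateCol (1 - P) i (fun _ => (1:ℝ))).mulVec y
        = (fun _ => y i) + ((1 : Matrix (Fin n) (Fin n) ℝ) - P).mulVec
            (Function.update y i 0) := by
    intro y; funext j
    have hsplit : ∀ h : Fin n → ℝ,
        ∑ m, h m = h i + ∑ m ∈ Finset.univ.erase i, h m :=
      fun h => (Finset.add_sum_erase _ h (Finset.mem_univ i)).symm
    simp only [Matrix.mulVec, dotProduct, Pi.add_apply]
    rw [hsplit, hsplit (fun m => (1 - P) j m * Function.update y i 0 m)]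
    simp only [Matrix.updateCol_apply, if_pos rfl, if_true, Function.update_self, mul_zero,
      mul_one, one_mul, add_zero, zero_add]
    congr 1
    apply Finset.sum_congr rfl
    intro m hm
    have hmi : m ≠ i := Finset.ne_of_mem_erase hm
    rw [if_neg hmi, Function.update_of_ne hmi]
  intro x
  constructor
  · rintro ⟨a, ha⟩
    have hx0 : x - a • (fun _ => (1:ℝ)) ∈ LinearMap.range g := by
      rw [hrk]
      simp only [LinearMap.mem_ker, hf, Matrix.mulVecLin_apply]
      rw [Matrix.mulVec_sub, Matrix.mulVec_smul, hQone]
      funext j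
      simp [ha j]
    obtain ⟨z, hz⟩ := hx0
    simp only [hg, Matrix.mulVecLin_apply] at hz
    refine ⟨Function.update (fun m => z m - z i) i a, ?_⟩
    rw [hupdate]
    have h1 : Function.update (Function.update (fun m => z m - z i) i a) i 0
        = fun m => z m - z i := by
      rw [Function.update_idem]
      apply Function.update_eq_self_iff.2
      simp
    rw [h1, Function.update_self]
    have h2 : (fun m => z m - z i) = z - z i • (fun _ => (1:ℝ)) := by
      funext m; simp
    rw [h2, Matrix.mulVec_sub, Matrix.mulVec_smul, hLone, smul_zero, sub_zero, hz]
    funext j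
    simp
  · rintro ⟨y, rfl⟩
    refine ⟨y i, fun j => ?_⟩
    rw [hupdate, Matrix.mulVec_add, Matrix.mulVec_mulVec, hQL, Matrix.zero_mulVec,
      add_zero]
    have : (fun _ : Fin n => y i) = y i • (fun _ => (1:ℝ)) := by funext m; simp
    rw [this, Matrix.mulVec_smul, hQone]
    simp
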